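/- Let z_{1,1}, …, z_{1,N} ∈ ℝ^{q_1}, define I_1(w) = Σ_{i=1}^N w_i z_{1,i} z_{1,i}ᵀ and Φ_1(w) = −λ_min(I_1(w)) (a convex function of w). For k = 2, …, K, let z_{k,1}, …, z_{k,N} ∈ ℝ^{q_k}, I_k(w) = Σ_i w_i z_{k,i} z_{k,i}ᵀ, and Φ_k(w) = φ_k(I_k(w)) with φ_k convex on q_k×q_k matrices and differentiable at I_k(w*). Let w* ∈ Ω and η_2, …, η_K ≥ 0. Then w* minimizes Φ_1 + Σ_{k=2}^K η_k Φ_k over Ω if and only if there exists g ∈ ∂Φ_1(w*) such that gᵀ(w* − e_i) + Σ_{k=2}^K η_k d_k(i, w*) ≤ 0 for all i = 1, …, N, where d_k(i, w*) = trace(∇φ_k(I_k(w*))ᵀ (I_k(w*) − z_{k,i} z_{k,i}ᵀ)). -/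

import Mathlib

open Finset Matrix

noncomputable section

attribute [local instance] Matrix.normedAddCommGroup Matrix.normedSpace

/-- Dot product of two real vectors indexed by a finite type. -/
def dotp {α : Type*} [Fintype α] (g w : α → ℝ) : ℝ := ∑ i, g i * w i

/-- The probability simplex Ω in ℝ^N. -/
def simplex (N : ℕ) : Set (Fin N → ℝ) := {w | (∑ i, w i) = 1 ∧ ∀ i, 0 ≤ w i}

/-- The subdifferential of a convex function `Φ : ℝ^N → ℝ` at `w`. -/
def subdiff {N : ℕ} (Φ : (Fin N → ℝ) → ℝ) (w : Fin N → ℝ) : Set (Fin N → ℝ) :=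
  {g | ∀ w', dotp g (w' - w) ≤ Φ w' - Φ w}

/-- The i-th standard basis vector of ℝ^N. -/
def stdBasis {N : ℕ} (i : Fin N) : Fin N → ℝ := fun j => if j = i then 1 else 0

/-- The information matrix `I(w) = Σ_i w_i z_i z_iᵀ`. -/
def infoMat {N q : ℕ} (z : Fin N → Fin q → ℝ) (w : Fin N → ℝ) :
    Matrix (Fin q) (Fin q) ℝ := ∑ i, w i • Matrix.vecMulVec (z i) (z i)

/-- The smallest eigenvalue of a (symmetric) real matrix `M`. -/
def lambdaMin {q : ℕ} (M : Matrix (Fin q) (Fin q) ℝ) : ℝ :=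
  sInf {r : ℝ | ∃ v : Fin q → ℝ, v ≠ 0 ∧ M.mulVec v = r • v}

namespace Stmt12

/-! ### dot product and infoMat algebra -/

lemma dotp_sub {N : ℕ} (g a b : Fin N → ℝ) : dotp g (a - b) = dotp g a - dotp g b := by
  simp [dotp, mul_sub, Finset.sum_sub_distrib]

lemma dotp_add_smul {N : ℕ} (g a u : Fin N → ℝ) (t : ℝ) :
    dotp g (a + t • u) = dotp g a + t * dotp g u := by
  simp [dotp, mul_add, Finset.sum_add_distrib, Finset.mul_sum, mul_assoc, mul_comm, mul_left_comm]

lemma dotp_basis {N : ℕ} (g : Fin N → ℝ) (i : Fin N) : dotp g (_root_.stdBasis i) = g i := by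
  simp [dotp, _root_.stdBasis]

lemma dotp_zero {N : ℕ} (u : Fin N → ℝ) : dotp 0 u = 0 := by simp [dotp]

lemma dotp_smul_left {N : ℕ} (c : ℝ) (g u : Fin N → ℝ) :
    dotp (c • g) u = c * dotp g u := by
  simp [dotp, Finset.mul_sum, mul_assoc]

lemma dotp_add_left {N : ℕ} (g h u : Fin N → ℝ) :
    dotp (g + h) u = dotp g u + dotp h u := by
  simp [dotp, add_mul, Finset.sum_add_distrib]

lemma dotp_basis_sum {N : ℕ} (g w : Fin N → ℝ) :
    ∑ i, w i * dotp g (_root_.stdBasis i) = dotp g w := by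
  simp only [dotp_basis]
  simp [dotp, mul_comm]

lemma continuous_dotp_left {N : ℕ} (x : Fin N → ℝ) :
    Continuous fun g : Fin N → ℝ => dotp g x := by
  unfold dotp
  exact continuous_finset_sum _ fun i _ => (continuous_apply i).mul continuous_const

lemma sum_smul_basis {N : ℕ} (x : Fin N → ℝ) :
    ∑ i, x i • _root_.stdBasis i = x := by
  ext j
  rw [Finset.sum_apply]
  simp only [Pi.smul_apply, _root_.stdBasis, smul_eq_mul, mul_ite, mul_one, mul_zero]
  rw [Finset.sum_ite_eq Finset.univ j x]
  simp

lemma infoMat_basis {N q : ℕ} (z : Fin N → Fin q → ℝ) (i : Fin N) :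
    infoMat z (_root_.stdBasis i) = Matrix.vecMulVec (z i) (z i) := by
  simp [infoMat, _root_.stdBasis, ite_smul]

lemma infoMat_add {N q : ℕ} (z : Fin N → Fin q → ℝ) (a b : Fin N → ℝ) :
    infoMat z (a + b) = infoMat z a + infoMat z b := by
  simp [infoMat, add_smul, Finset.sum_add_distrib]

lemma infoMat_smul {N q : ℕ} (z : Fin N → Fin q → ℝ) (c : ℝ) (a : Fin N → ℝ) :
    infoMat z (c • a) = c • infoMat z a := by
  simp [infoMat, smul_smul, Finset.smul_sum]

lemma infoMat_affine {N q : ℕ} (z : Fin N → Fin q → ℝ) (a u : Fin N → ℝ) (t : ℝ) :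
    infoMat z (a + t • u) = infoMat z a + t • infoMat z u := by
  rw [infoMat_add, infoMat_smul]

lemma dot_vecMulVec {q : ℕ} (a v : Fin q → ℝ) :
    v ⬝ᵥ (Matrix.vecMulVec a a).mulVec v = (a ⬝ᵥ v) ^ 2 := by
  simp only [Matrix.mulVec, dotProduct, Matrix.vecMulVec_apply]
  rw [pow_two, Finset.sum_mul]
  simp only [Finset.mul_sum]
  refine Finset.sum_congr rfl fun c _ => ?_
  refine Finset.sum_congr rfl fun j _ => ?_
  ring

lemma quadForm {N q : ℕ} (z : Fin N → Fin q → ℝ) (w : Fin N → ℝ) (v : Fin q → ℝ) :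
    v ⬝ᵥ (infoMat z w).mulVec v = ∑ i, w i * (z i ⬝ᵥ v) ^ 2 := by
  classical
  have key : ∀ s : Finset (Fin N),
      v ⬝ᵥ (∑ i ∈ s, w i • Matrix.vecMulVec (z i) (z i)).mulVec v
        = ∑ i ∈ s, w i * (z i ⬝ᵥ v) ^ 2 := by
    intro s
    induction s using Finset.induction with
    | empty => simp
    | insert _ _ h ih =>
      rw [Finset.sum_insert h, Matrix.add_mulVec, dotProduct_add, ih,
        Finset.sum_insert h, Matrix.smul_mulVec, dotProduct_smul,
        dot_vecMulVec, smul_eq_mul]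
  exact key Finset.univ

lemma infoMat_symm {N q : ℕ} (z : Fin N → Fin q → ℝ) (w : Fin N → ℝ) (a b : Fin q) :
    infoMat z w a b = infoMat z w b a := by
  simp only [infoMat, Finset.sum_apply, Matrix.sum_apply, Matrix.smul_apply,
    Matrix.vecMulVec_apply, smul_eq_mul]
  refine Finset.sum_congr rfl fun i _ => by ring

/-! ### the Rayleigh-quotient characterisation of `lambdaMin` -/

lemma dot_self_nonneg {q : ℕ} (v : Fin q → ℝ) : 0 ≤ v ⬝ᵥ v :=
  Finset.sum_nonneg fun i _ => mul_self_nonneg _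

lemma dot_self_pos {q : ℕ} {v : Fin q → ℝ} (hv : v ≠ 0) : 0 < v ⬝ᵥ v :=
  lt_of_le_of_ne (dot_self_nonneg v)
    (fun h => hv (dotProduct_self_eq_zero.mp h.symm))

lemma isCompact_sphere' (q : ℕ) : IsCompact {v : Fin q → ℝ | v ⬝ᵥ v = 1} := by
  apply Metric.isCompact_of_isClosed_isBounded
  · have : Continuous fun v : Fin q → ℝ => v ⬝ᵥ v := by
      unfold dotProduct
      exact continuous_finset_sum _ fun i _ => (continuous_apply i).mul (continuous_apply i)
    exact isClosed_eq this continuous_const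
  · rw [Metric.isBounded_iff_subset_closedBall 0]
    refine ⟨1, fun v hv => ?_⟩
    simp only [Metric.mem_closedBall, dist_zero_right]
    rw [pi_norm_le_iff_of_nonneg zero_le_one]
    intro i
    rw [Real.norm_eq_abs, abs_le_one_iff_mul_self_le_one]
    calc v i * v i ≤ ∑ j, v j * v j :=
          Finset.single_le_sum (fun j _ => mul_self_nonneg (v j)) (Finset.mem_univ i)
      _ = 1 := hv

lemma continuous_quad {q : ℕ} (M : Matrix (Fin q) (Fin q) ℝ) :
    Continuous fun v : Fin q → ℝ => v ⬝ᵥ M.mulVec v := by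
  unfold dotProduct Matrix.mulVec
  exact continuous_finset_sum _ fun i _ => (continuous_apply i).mul
    (continuous_finset_sum _ fun j _ => continuous_const.mul (continuous_apply j))

lemma dot_mulVec_symm {q : ℕ} {M : Matrix (Fin q) (Fin q) ℝ}
    (hsym : ∀ i j, M i j = M j i) (u v : Fin q → ℝ) :
    u ⬝ᵥ M.mulVec v = v ⬝ᵥ M.mulVec u := by
  simp only [dotProduct, Matrix.mulVec, Finset.mul_sum]
  rw [Finset.sum_comm]
  refine Finset.sum_congr rfl fun i _ => Finset.sum_congr rfl fun j _ => ?_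
  rw [hsym j i]; ring

lemma lambdaMin_spec {q : ℕ} (hq : 0 < q) (M : Matrix (Fin q) (Fin q) ℝ)
    (hsym : ∀ i j, M i j = M j i) :
    ∃ v₀ : Fin q → ℝ, v₀ ⬝ᵥ v₀ = 1 ∧ v₀ ⬝ᵥ M.mulVec v₀ = lambdaMin M ∧
      ∀ v : Fin q → ℝ, v ⬝ᵥ v = 1 → lambdaMin M ≤ v ⬝ᵥ M.mulVec v := by
  classical
  set K := {v : Fin q → ℝ | v ⬝ᵥ v = 1} with hK
  have hKne : K.Nonempty := by
    have h1 : Pi.single (⟨0, hq⟩ : Fin q) (1:ℝ) ⬝ᵥ Pi.single (⟨0, hq⟩ : Fin q) (1:ℝ) = 1 := by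
      rw [single_dotProduct]; simp
    exact ⟨_, h1⟩
  obtain ⟨v₀, hv₀K, hv₀min⟩ := (isCompact_sphere' q).exists_isMinOn hKne
    (continuous_quad M).continuousOn
  set μ := v₀ ⬝ᵥ M.mulVec v₀ with hμ
  have hbound : ∀ v : Fin q → ℝ, μ * (v ⬝ᵥ v) ≤ v ⬝ᵥ M.mulVec v := by
    intro v
    rcases eq_or_ne v 0 with rfl | hv
    · simp
    · have hpos : 0 < v ⬝ᵥ v := dot_self_pos hv
      set c := (Real.sqrt (v ⬝ᵥ v))⁻¹ with hc
      have hsq : Real.sqrt (v ⬝ᵥ v) ^ 2 = v ⬝ᵥ v := Real.sq_sqrt hpos.le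
      have hsqrtpos : 0 < Real.sqrt (v ⬝ᵥ v) := Real.sqrt_pos.mpr hpos
      have hc2 : c ^ 2 = (v ⬝ᵥ v)⁻¹ := by
        rw [hc, inv_pow, hsq]
      have hcsq : c ^ 2 * (v ⬝ᵥ v) = 1 := by
        rw [hc2, inv_mul_cancel₀ hpos.ne']
      have hmem : (c • v) ∈ K := by
        show (c • v) ⬝ᵥ (c • v) = 1
        rw [smul_dotProduct, dotProduct_smul, smul_eq_mul, smul_eq_mul,
          ← mul_assoc, ← pow_two, hcsq]
      have hquad : (c • v) ⬝ᵥ M.mulVec (c • v) = c ^ 2 * (v ⬝ᵥ M.mulVec v) := by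
        rw [Matrix.mulVec_smul, smul_dotProduct, dotProduct_smul,
          smul_eq_mul, smul_eq_mul, ← mul_assoc, ← pow_two]
      have h3 : μ ≤ (c • v) ⬝ᵥ M.mulVec (c • v) := hv₀min hmem
      rw [hquad] at h3
      have h2 : μ * (v ⬝ᵥ v) ≤ c ^ 2 * (v ⬝ᵥ M.mulVec v) * (v ⬝ᵥ v) :=
        mul_le_mul_of_nonneg_right h3 hpos.le
      calc μ * (v ⬝ᵥ v) ≤ c ^ 2 * (v ⬝ᵥ M.mulVec v) * (v ⬝ᵥ v) := h2
        _ = (c ^ 2 * (v ⬝ᵥ v)) * (v ⬝ᵥ M.mulVec v) := by ring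
        _ = v ⬝ᵥ M.mulVec v := by rw [hcsq, one_mul]
  have heig : M.mulVec v₀ = μ • v₀ := by
    set A : Matrix (Fin q) (Fin q) ℝ := M - μ • (1 : Matrix (Fin q) (Fin q) ℝ) with hA
    have hAmul : ∀ x, A.mulVec x = M.mulVec x - μ • x := by
      intro x
      rw [hA, Matrix.sub_mulVec, Matrix.smul_mulVec, Matrix.one_mulVec]
    have hAsym : ∀ i j, A i j = A j i := by
      intro i j
      by_cases h : i = j
      · subst h; rfl
      · simp [hA, Matrix.sub_apply, Matrix.smul_apply, Matrix.one_apply, h, Ne.symm h,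
          hsym i j]
    have hApsd : ∀ x, 0 ≤ x ⬝ᵥ A.mulVec x := by
      intro x
      rw [hAmul, dotProduct_sub, dotProduct_smul, smul_eq_mul, sub_nonneg]
      exact hbound x
    have hAv₀ : v₀ ⬝ᵥ A.mulVec v₀ = 0 := by
      rw [hAmul, dotProduct_sub, dotProduct_smul, smul_eq_mul, hv₀K, mul_one,
        sub_self]
    have hcross : ∀ u, u ⬝ᵥ A.mulVec v₀ = 0 := by
      intro u
      set a := u ⬝ᵥ A.mulVec u with ha
      set b := u ⬝ᵥ A.mulVec v₀ with hb
      have hanneg : 0 ≤ a := hApsd u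
      have hexp : ∀ t : ℝ, 0 ≤ a * t ^ 2 + 2 * b * t := by
        intro t
        have h0 := hApsd (v₀ + t • u)
        have : (v₀ + t • u) ⬝ᵥ A.mulVec (v₀ + t • u)
            = v₀ ⬝ᵥ A.mulVec v₀ + t * (u ⬝ᵥ A.mulVec v₀) + t * (v₀ ⬝ᵥ A.mulVec u)
              + t * t * (u ⬝ᵥ A.mulVec u) := by
          simp only [Matrix.mulVec_add, Matrix.mulVec_smul, add_dotProduct,
            dotProduct_add, smul_dotProduct, dotProduct_smul,
            smul_eq_mul]
          ring
        rw [this, hAv₀, dot_mulVec_symm hAsym v₀ u] at h0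
        calc (0:ℝ) ≤ 0 + t * b + t * b + t * t * a := h0
          _ = a * t ^ 2 + 2 * b * t := by ring
      have hb2 : b ^ 2 * (a + 2) ≤ 0 := by
        have hpos : (0:ℝ) < a + 1 := by linarith
        have h6 := hexp (-b / (a + 1))
        have hh : a * (-b / (a + 1)) ^ 2 + 2 * b * (-b / (a + 1))
            = -(b ^ 2 * (a + 2)) / (a + 1) ^ 2 := by
          field_simp
          ring
        rw [hh] at h6
        have h7 : (0:ℝ) < (a + 1) ^ 2 := by positivity
        have h8 := mul_nonneg h6 h7.le
        rw [div_mul_cancel₀ _ h7.ne'] at h8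
        linarith
      have hb0 : b = 0 := by nlinarith [sq_nonneg b]
      exact hb0
    have hzero : A.mulVec v₀ = 0 := by
      have := hcross (A.mulVec v₀)
      exact dotProduct_self_eq_zero.mp this
    have hAv := hAmul v₀
    rw [hzero] at hAv
    have hAv' := hAv.symm
    rwa [sub_eq_zero] at hAv'
  have hv₀ne : v₀ ≠ 0 := by
    intro h
    rw [h] at hv₀K
    simp only [Set.mem_setOf_eq, zero_dotProduct] at hv₀K
    exact one_ne_zero hv₀K.symm
  have hμmem : μ ∈ {r : ℝ | ∃ v : Fin q → ℝ, v ≠ 0 ∧ M.mulVec v = r • v} := ⟨v₀, hv₀ne, heig⟩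
  have hlb : ∀ r ∈ {r : ℝ | ∃ v : Fin q → ℝ, v ≠ 0 ∧ M.mulVec v = r • v}, μ ≤ r := by
    rintro r ⟨v, hv, hMv⟩
    have h1 : v ⬝ᵥ M.mulVec v = r * (v ⬝ᵥ v) := by
      rw [hMv, dotProduct_smul, smul_eq_mul]
    have h2 := hbound v
    rw [h1] at h2
    have hpos : 0 < v ⬝ᵥ v := dot_self_pos hv
    exact le_of_mul_le_mul_right (by linarith) hpos
  have hlm : lambdaMin M = μ := by
    apply le_antisymm
    · exact csInf_le ⟨μ, hlb⟩ hμmem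
    · exact le_csInf ⟨μ, hμmem⟩ hlb
  refine ⟨v₀, hv₀K, by rw [hlm], fun v hv => ?_⟩
  rw [hlm]
  have := hbound v
  rwa [hv, mul_one] at this

/-! ### convex-analytic helpers -/

lemma grad_ineq {E : Type*} [NormedAddCommGroup E] [NormedSpace ℝ E] {f : E → ℝ}
    (hf : ConvexOn ℝ Set.univ f) {x : E} {L : E →L[ℝ] ℝ}
    (hd : HasFDerivAt f L x) (y : E) : L (y - x) ≤ f y - f x := by
  set ψ : ℝ → ℝ := fun t => f (x + t • (y - x)) with hψ
  have hinner : HasDerivAt (fun t : ℝ => x + t • (y - x)) (y - x) 0 := by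
    have h1 : HasDerivAt (fun t : ℝ => t • (y - x)) ((1:ℝ) • (y - x)) 0 :=
      (hasDerivAt_id 0).smul_const (y - x)
    simpa using h1.const_add x
  have hder : HasDerivAt ψ (L (y - x)) 0 := by
    have h0 : x + (0:ℝ) • (y - x) = x := by simp
    exact (h0 ▸ hd).comp_hasDerivAt 0 hinner
  have hslope : ∀ t : ℝ, t ∈ Set.Ioo (0:ℝ) 1 → slope ψ 0 t ≤ f y - f x := by
    intro t ht
    have h1 : ψ t ≤ (1 - t) * f x + t * f y := by
      have := hf.2 (Set.mem_univ x) (Set.mem_univ y) (by linarith [ht.1, ht.2] : (0:ℝ) ≤ 1 - t)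
        ht.1.le (by ring)
      calc ψ t = f ((1 - t) • x + t • y) := by
            have heq : x + t • (y - x) = (1 - t) • x + t • y := by module
            rw [hψ]
            exact congrArg f heq
        _ ≤ (1 - t) * f x + t * f y := by simpa [smul_eq_mul] using this
    have h0 : ψ 0 = f x := by simp [hψ]
    rw [slope_def_field]
    have : (ψ t - ψ 0) / t ≤ f y - f x := by
      rw [div_le_iff₀ ht.1]
      rw [h0]
      nlinarith [ht.1, ht.2]
    simpa [div_eq_inv_mul, sub_zero] using this
  have htend : Filter.Tendsto (slope ψ 0) (nhdsWithin 0 (Set.Ioi 0)) (nhds (L (y - x))) := by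
    have := hasDerivAt_iff_tendsto_slope.mp hder
    exact this.mono_left (nhdsWithin_mono 0 (fun t ht => ne_of_gt ht))
  have hev : ∀ᶠ t in nhdsWithin (0:ℝ) (Set.Ioi 0), slope ψ 0 t ≤ f y - f x := by
    filter_upwards [Ioo_mem_nhdsGT_of_mem (Set.mem_Ico.mpr ⟨le_refl 0, one_pos⟩)] with t ht
    exact hslope t ht
  exact le_of_tendsto htend hev

lemma deriv_nonneg_of_right_min {ψ : ℝ → ℝ} {d : ℝ} (hd : HasDerivAt ψ d 0)
    (hmin : ∀ t ∈ Set.Ioo (0:ℝ) 1, ψ 0 ≤ ψ t) : 0 ≤ d := by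
  have htend : Filter.Tendsto (slope ψ 0) (nhdsWithin 0 (Set.Ioi 0)) (nhds d) :=
    (hasDerivAt_iff_tendsto_slope.mp hd).mono_left
      (nhdsWithin_mono 0 (fun t ht => ne_of_gt ht))
  have hev : ∀ᶠ t in nhdsWithin (0:ℝ) (Set.Ioi 0), 0 ≤ slope ψ 0 t := by
    filter_upwards [Ioo_mem_nhdsGT_of_mem (Set.mem_Ico.mpr ⟨le_refl 0, one_pos⟩)] with t ht
    rw [slope_def_field, div_nonneg_iff]
    exact Or.inl ⟨by linarith [hmin t ht], by simpa using ht.1.le⟩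
  exact ge_of_tendsto htend hev

lemma eventually_incr_le {ψ : ℝ → ℝ} {d : ℝ} (hd : HasDerivAt ψ d 0) {ε : ℝ} (hε : 0 < ε) :
    ∀ᶠ t in nhdsWithin (0:ℝ) (Set.Ioi 0), ψ t - ψ 0 ≤ t * (d + ε) := by
  have htend : Filter.Tendsto (slope ψ 0) (nhdsWithin 0 (Set.Ioi 0)) (nhds d) :=
    (hasDerivAt_iff_tendsto_slope.mp hd).mono_left
      (nhdsWithin_mono 0 (fun t ht => ne_of_gt ht))
  have hev : ∀ᶠ t in nhdsWithin (0:ℝ) (Set.Ioi 0), slope ψ 0 t < d + ε :=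
    htend.eventually (Filter.Tendsto.eventually_lt_const (by linarith) Filter.tendsto_id)
  have hpos : ∀ᶠ t in nhdsWithin (0:ℝ) (Set.Ioi 0), (0:ℝ) < t :=
    eventually_mem_nhdsWithin.mono (fun t ht => ht)
  filter_upwards [hev, hpos] with t ht htpos
  rw [slope_def_field] at ht
  have h1 : (ψ t - ψ 0) / t ≤ d + ε := by
    simpa [div_eq_inv_mul, sub_zero] using ht.le
  calc ψ t - ψ 0 = (ψ t - ψ 0) / t * t := by field_simp
    _ ≤ (d + ε) * t := mul_le_mul_of_nonneg_right h1 htpos.le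
    _ = t * (d + ε) := mul_comm _ _

/-! ### the linearised penalty functional -/

section Dl

variable {N m : ℕ} (q : Fin m → ℕ) (z : ∀ k : Fin m, Fin N → Fin (q k) → ℝ)
  (L : ∀ k : Fin m, Matrix (Fin (q k)) (Fin (q k)) ℝ →L[ℝ] ℝ) (η : Fin m → ℝ)

/-- The linear functional `u ↦ Σ_k η_k L_k(I_k(u))`. -/
def Dl : (Fin N → ℝ) → ℝ := fun u => ∑ k, η k * L k (infoMat (z k) u)

lemma Dl_sub (a b : Fin N → ℝ) : Dl q z L η (a - b) = Dl q z L η a - Dl q z L η b := by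
  unfold Dl
  rw [← Finset.sum_sub_distrib]
  refine Finset.sum_congr rfl fun k _ => ?_
  have : infoMat (z k) (a - b) = infoMat (z k) a - infoMat (z k) b := by
    have h1 : a - b + b = a := by abel
    have h2 := infoMat_add (z k) (a - b) b
    rw [h1] at h2
    rw [h2]; abel
  rw [this, map_sub]
  ring

lemma Dl_basis (w : Fin N → ℝ) :
    Dl q z L η w = ∑ i, w i * Dl q z L η (_root_.stdBasis i) := by
  unfold Dl
  have h1 : ∀ k, L k (infoMat (z k) w) = ∑ i, w i * L k (Matrix.vecMulVec (z k i) (z k i)) := by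
    intro k
    rw [infoMat, map_sum]
    refine Finset.sum_congr rfl fun i _ => ?_
    rw [_root_.map_smul]; rfl
  calc ∑ k, η k * L k (infoMat (z k) w)
      = ∑ k, ∑ i, η k * (w i * L k (Matrix.vecMulVec (z k i) (z k i))) := by
        refine Finset.sum_congr rfl fun k _ => ?_; rw [h1 k, Finset.mul_sum]
    _ = ∑ i, ∑ k, η k * (w i * L k (Matrix.vecMulVec (z k i) (z k i))) := Finset.sum_comm
    _ = ∑ i, w i * ∑ k, η k * L k (infoMat (z k) (_root_.stdBasis i)) := by
        refine Finset.sum_congr rfl fun i _ => ?_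
        rw [Finset.mul_sum]
        refine Finset.sum_congr rfl fun k _ => ?_
        rw [infoMat_basis]
        ring

variable {φ : ∀ k : Fin m, Matrix (Fin (q k)) (Fin (q k)) ℝ → ℝ}

lemma psi_deriv (ws u : Fin N → ℝ)
    (hdiff : ∀ k, HasFDerivAt (φ k) (L k) (infoMat (z k) ws)) :
    HasDerivAt (fun t : ℝ => ∑ k, η k * φ k (infoMat (z k) (ws + t • u)))
      (Dl q z L η u) 0 := by
  have hterm : ∀ k, HasDerivAt (fun t : ℝ => η k * φ k (infoMat (z k) (ws + t • u)))
      (η k * L k (infoMat (z k) u)) 0 := by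
    intro k
    have hinner : HasDerivAt (fun t : ℝ => infoMat (z k) ws + t • infoMat (z k) u)
        (infoMat (z k) u) 0 := by
      have h := ((hasDerivAt_id (0:ℝ)).smul_const (infoMat (z k) u)).const_add
        (infoMat (z k) ws)
      rw [one_smul] at h
      exact h
    have hcomp : HasDerivAt (fun t : ℝ => φ k (infoMat (z k) ws + t • infoMat (z k) u))
        (L k (infoMat (z k) u)) 0 := by
      refine HasFDerivAt.comp_hasDerivAt _ ?_ hinner
      have h0 : infoMat (z k) ws + (0:ℝ) • infoMat (z k) u = infoMat (z k) ws := by simp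
      rw [h0]; exact hdiff k
    have heq : (fun t : ℝ => η k * φ k (infoMat (z k) (ws + t • u)))
        = fun t : ℝ => η k * φ k (infoMat (z k) ws + t • infoMat (z k) u) := by
      funext t; rw [infoMat_affine]
    rw [heq]
    exact hcomp.const_mul (η k)
  have hsum := HasDerivAt.fun_sum (fun k (_ : k ∈ Finset.univ) => hterm k)
  simpa [Dl] using hsum

end Dl

lemma seg_mem_simplex {N : ℕ} {ws w : Fin N → ℝ} (h1 : ws ∈ simplex N) (h2 : w ∈ simplex N)
    {t : ℝ} (h0 : 0 ≤ t) (ht : t ≤ 1) : ws + t • (w - ws) ∈ simplex N := by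
  constructor
  · have hsum : ∑ i, (ws i + t * (w i - ws i)) = 1 := by
      rw [Finset.sum_add_distrib, ← Finset.mul_sum, Finset.sum_sub_distrib, h1.1, h2.1]
      ring
    simpa [Pi.add_apply, Pi.smul_apply, Pi.sub_apply, smul_eq_mul] using hsum
  · intro i
    simp only [Pi.add_apply, Pi.smul_apply, Pi.sub_apply, smul_eq_mul]
    nlinarith [h1.2 i, h2.2 i]

end Stmt12

set_option maxHeartbeats 2000000 in
/-- with `Φ₁(w) = −λ_min(I₁(w))` and, for `k = 2, …, K` (here indexed by
`Fin m`, `m = K − 1 ≥ 1`), `Φ_k(w) = φ_k(I_k(w))` with `φ_k` convex and differentiable at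
`I_k(w*)` with gradient matrix `G k`, and multipliers `η_k ≥ 0`:  `w*` minimizes
`Φ₁ + Σ_k η_k Φ_k` over the simplex iff there is `g ∈ ∂Φ₁(w*)` with
`gᵀ(w* − e_i) + Σ_k η_k d_k(i, w*) ≤ 0` for all `i`. -/
theorem stmt12 {N q₁ m : ℕ} (hm : 1 ≤ m)
    (z₁ : Fin N → Fin q₁ → ℝ)
    (q : Fin m → ℕ)
    (z : ∀ k : Fin m, Fin N → Fin (q k) → ℝ)
    (φ : ∀ k : Fin m, Matrix (Fin (q k)) (Fin (q k)) ℝ → ℝ)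
    (hφconv : ∀ k, ConvexOn ℝ Set.univ (φ k))
    (ws : Fin N → ℝ) (hws : ws ∈ simplex N)
    (L : ∀ k : Fin m, Matrix (Fin (q k)) (Fin (q k)) ℝ →L[ℝ] ℝ)
    (hdiff : ∀ k, HasFDerivAt (φ k) (L k) (infoMat (z k) ws))
    (G : ∀ k : Fin m, Matrix (Fin (q k)) (Fin (q k)) ℝ)
    (hG : ∀ k, ∀ H : Matrix (Fin (q k)) (Fin (q k)) ℝ, L k H = Matrix.trace ((G k)ᵀ * H))
    (η : Fin m → ℝ) (hη : ∀ k, 0 ≤ η k) :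
    (∀ w ∈ simplex N,
        -(lambdaMin (infoMat z₁ ws)) + (∑ k, η k * φ k (infoMat (z k) ws)) ≤
          -(lambdaMin (infoMat z₁ w)) + ∑ k, η k * φ k (infoMat (z k) w)) ↔
      ∃ g ∈ subdiff (fun w => -(lambdaMin (infoMat z₁ w))) ws,
        ∀ i : Fin N,
          dotp g (ws - stdBasis i) +
            (∑ k, η k * Matrix.trace ((G k)ᵀ *
              (infoMat (z k) ws - Matrix.vecMulVec (z k i) (z k i)))) ≤ 0 := by
  classical
  -- abbreviations
  set Dl : (Fin N → ℝ) → ℝ := Stmt12.Dl q z L η with hDl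
  -- the trace sums are values of the linear functional Dl
  have hCi : ∀ i : Fin N,
      (∑ k, η k * Matrix.trace ((G k)ᵀ *
        (infoMat (z k) ws - Matrix.vecMulVec (z k i) (z k i))))
      = Dl ws - Dl (_root_.stdBasis i) := by
    intro i
    have h1 : ∀ k, Matrix.trace ((G k)ᵀ *
        (infoMat (z k) ws - Matrix.vecMulVec (z k i) (z k i)))
        = L k (infoMat (z k) ws) - L k (infoMat (z k) (_root_.stdBasis i)) := by
      intro k
      rw [← hG k, Stmt12.infoMat_basis, map_sub]
    calc (∑ k, η k * Matrix.trace ((G k)ᵀ *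
        (infoMat (z k) ws - Matrix.vecMulVec (z k i) (z k i))))
        = ∑ k, (η k * L k (infoMat (z k) ws)
            - η k * L k (infoMat (z k) (_root_.stdBasis i))) := by
          refine Finset.sum_congr rfl fun k _ => ?_
          rw [h1 k]; ring
      _ = Dl ws - Dl (_root_.stdBasis i) := by
          rw [Finset.sum_sub_distrib]; rfl
  have hDl_sub : ∀ a b : Fin N → ℝ, Dl (a - b) = Dl a - Dl b :=
    fun a b => Stmt12.Dl_sub q z L η a b
  have hDl_basis : ∀ w : Fin N → ℝ, Dl w = ∑ i, w i * Dl (_root_.stdBasis i) :=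
    fun w => Stmt12.Dl_basis q z L η w
  constructor
  · -- hard direction
    intro hmin
    -- derivative facts valid in both cases
    have hψder : ∀ u : Fin N → ℝ,
        HasDerivAt (fun t : ℝ => ∑ k, η k * φ k (infoMat (z k) (ws + t • u))) (Dl u) 0 :=
      fun u => Stmt12.psi_deriv q z L η ws u hdiff
    have hminseg : ∀ w ∈ simplex N, ∀ t ∈ Set.Ioo (0:ℝ) 1,
        -(lambdaMin (infoMat z₁ ws)) + (∑ k, η k * φ k (infoMat (z k) ws)) ≤
          -(lambdaMin (infoMat z₁ (ws + t • (w - ws))))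
            + ∑ k, η k * φ k (infoMat (z k) (ws + t • (w - ws))) := by
      intro w hw t ht
      exact hmin _ (Stmt12.seg_mem_simplex hws hw ht.1.le ht.2.le)
    rcases Nat.eq_zero_or_pos q₁ with hq0 | hq1
    · -- q₁ = 0 : the λ_min term is identically 0
      subst hq0
      have hlmin : ∀ w : Fin N → ℝ, lambdaMin (infoMat z₁ w) = 0 := by
        intro w
        have hempty : {r : ℝ | ∃ v : Fin 0 → ℝ, v ≠ 0 ∧ (infoMat z₁ w).mulVec v = r • v} = ∅ := by
          ext r
          simp only [Set.mem_setOf_eq, Set.mem_empty_iff_false, iff_false, not_exists]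
          intro v hv
          exact absurd (Subsingleton.elim v 0) hv.1
        rw [lambdaMin, hempty, Real.sInf_empty]
      refine ⟨0, ?_, ?_⟩
      · intro w'
        show dotp (0 : Fin N → ℝ) (w' - ws)
          ≤ -(lambdaMin (infoMat z₁ w')) - -(lambdaMin (infoMat z₁ ws))
        rw [Stmt12.dotp_zero, hlmin, hlmin]
        simp
      · intro i
        rw [hCi i, Stmt12.dotp_zero, zero_add]
        have hbasis_mem : _root_.stdBasis i ∈ simplex N := by
          constructor
          · simp [_root_.stdBasis]
          · intro j; unfold _root_.stdBasis; positivity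
        have hmono : ∀ t ∈ Set.Ioo (0:ℝ) 1,
            (fun t : ℝ => ∑ k, η k * φ k (infoMat (z k) (ws + t • (_root_.stdBasis i - ws)))) 0
            ≤ (fun t : ℝ => ∑ k, η k * φ k (infoMat (z k) (ws + t • (_root_.stdBasis i - ws)))) t := by
          intro t ht
          have h1 := hminseg (_root_.stdBasis i) hbasis_mem t ht
          rw [hlmin, hlmin] at h1
          simpa using h1
        have hd := Stmt12.deriv_nonneg_of_right_min (hψder (_root_.stdBasis i - ws)) hmono
        rw [hDl_sub] at hd
        linarith
    · -- q₁ ≥ 1 : the full Danskin/separation argument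
      -- the linear supporting functions of Φ₁
      set gv : (Fin q₁ → ℝ) → (Fin N → ℝ) := fun v i => -((z₁ i ⬝ᵥ v) ^ 2) with hgv
      have hgv_dot : ∀ (v : Fin q₁ → ℝ) (x : Fin N → ℝ),
          dotp (gv v) x = -(v ⬝ᵥ (infoMat z₁ x).mulVec v) := by
        intro v x
        rw [Stmt12.quadForm z₁ x v, ← Finset.sum_neg_distrib]
        unfold dotp
        refine Finset.sum_congr rfl fun i _ => ?_
        simp only [hgv]
        ring
      have hrep : ∀ x : Fin N → ℝ,
          (∃ v, v ⬝ᵥ v = 1 ∧ dotp (gv v) x = -(lambdaMin (infoMat z₁ x)))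
          ∧ ∀ v, v ⬝ᵥ v = 1 → dotp (gv v) x ≤ -(lambdaMin (infoMat z₁ x)) := by
        intro x
        obtain ⟨v₀, hv₀, heq, hbd⟩ := Stmt12.lambdaMin_spec hq1 (infoMat z₁ x)
          (fun a b => Stmt12.infoMat_symm z₁ x a b)
        refine ⟨⟨v₀, hv₀, ?_⟩, fun v hv => ?_⟩
        · rw [hgv_dot, heq]
        · rw [hgv_dot]
          have := hbd v hv
          linarith
      have hgv_cont : Continuous gv := by
        refine continuous_pi fun i => ?_
        have hc : Continuous fun v : Fin q₁ → ℝ => z₁ i ⬝ᵥ v := by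
          unfold dotProduct
          exact continuous_finset_sum _ fun j _ => continuous_const.mul (continuous_apply j)
        simp only [hgv]
        exact (hc.pow 2).neg
      -- the active set V and its convex hull of supporting gradients
      set V : Set (Fin q₁ → ℝ) :=
        {v | v ⬝ᵥ v = 1 ∧ dotp (gv v) ws = -(lambdaMin (infoMat z₁ ws))} with hV
      have hVc : IsCompact V := by
        have h1 : V = {v : Fin q₁ → ℝ | v ⬝ᵥ v = 1}
            ∩ {v | dotp (gv v) ws = -(lambdaMin (infoMat z₁ ws))} := by
          ext v; simp [hV, Set.mem_inter_iff]
        rw [h1]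
        exact (Stmt12.isCompact_sphere' q₁).inter_right
          (isClosed_eq ((Stmt12.continuous_dotp_left ws).comp hgv_cont) continuous_const)
      have hVne : V.Nonempty := by
        obtain ⟨v₀, hv₀, heq⟩ := (hrep ws).1
        exact ⟨v₀, hv₀, heq⟩
      set S : Set (Fin N → ℝ) := gv '' V with hS
      have hScomp : IsCompact S := hVc.image hgv_cont
      set Sc : Set (Fin N → ℝ) := closure (convexHull ℝ S) with hScdef
      have hScc : IsCompact Sc :=
        ((isBounded_convexHull.mpr hScomp.isBounded)).isCompact_closure
      have hScconv : Convex ℝ Sc := (convex_convexHull ℝ S).closure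
      have hSsub : S ⊆ Sc := (subset_convexHull ℝ S).trans subset_closure
      have hScne : Sc.Nonempty := (hVne.image gv).mono hSsub
      -- every element of Sc is a subgradient of Φ₁ at ws, exact at ws
      have hCsub : Sc ⊆ {g : Fin N → ℝ | dotp g ws = -(lambdaMin (infoMat z₁ ws))
          ∧ ∀ w', dotp g w' ≤ -(lambdaMin (infoMat z₁ w'))} := by
        refine closure_minimal (convexHull_min ?_ ?_) ?_
        · rintro g ⟨v, hvV, rfl⟩
          exact ⟨hvV.2, fun w' => (hrep w').2 v hvV.1⟩
        · rintro g₁ ⟨hg₁e, hg₁l⟩ g₂ ⟨hg₂e, hg₂l⟩ a b ha hb hab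
          constructor
          · rw [Stmt12.dotp_add_left, Stmt12.dotp_smul_left, Stmt12.dotp_smul_left, hg₁e, hg₂e]
            linear_combination (-(lambdaMin (infoMat z₁ ws))) * hab
          · intro w'
            rw [Stmt12.dotp_add_left, Stmt12.dotp_smul_left, Stmt12.dotp_smul_left]
            have h1 := mul_le_mul_of_nonneg_left (hg₁l w') ha
            have h2 := mul_le_mul_of_nonneg_left (hg₂l w') hb
            have h3 : a * -(lambdaMin (infoMat z₁ w')) + b * -(lambdaMin (infoMat z₁ w'))
                = -(lambdaMin (infoMat z₁ w')) := by
              linear_combination (-(lambdaMin (infoMat z₁ w'))) * hab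
            linarith
        · have hCeq : {g : Fin N → ℝ | dotp g ws = -(lambdaMin (infoMat z₁ ws))
              ∧ ∀ w', dotp g w' ≤ -(lambdaMin (infoMat z₁ w'))}
              = {g : Fin N → ℝ | dotp g ws = -(lambdaMin (infoMat z₁ ws))}
                ∩ ⋂ w', {g : Fin N → ℝ | dotp g w' ≤ -(lambdaMin (infoMat z₁ w'))} := by
            ext g; simp [Set.mem_iInter]
          rw [hCeq]
          exact (isClosed_eq (Stmt12.continuous_dotp_left ws) continuous_const).inter
            (isClosed_iInter fun w' =>
              isClosed_le (Stmt12.continuous_dotp_left w') continuous_const)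
      -- suppose no certificate exists
      by_contra hcon
      push_neg at hcon
      have hcon' : ∀ g ∈ Sc, ∃ i,
          0 < dotp g (ws - _root_.stdBasis i) + (Dl ws - Dl (_root_.stdBasis i)) := by
        intro g hg
        have hgprop := hCsub hg
        have hgsub : g ∈ subdiff (fun w => -(lambdaMin (infoMat z₁ w))) ws := by
          intro w'
          rw [Stmt12.dotp_sub]
          have h1 := hgprop.2 w'
          have h2 := hgprop.1
          show dotp g w' - dotp g ws
            ≤ -(lambdaMin (infoMat z₁ w')) - -(lambdaMin (infoMat z₁ ws))
          linarith
        obtain ⟨i, hi⟩ := hcon g hgsub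
        refine ⟨i, ?_⟩
        rw [hCi i] at hi
        exact hi
      -- the affine image and the nonpositive orthant
      set A : (Fin N → ℝ) → (Fin N → ℝ) :=
        fun g i => dotp g (ws - _root_.stdBasis i) + (Dl ws - Dl (_root_.stdBasis i)) with hA
      have hAcont : Continuous A :=
        continuous_pi fun i =>
          (Stmt12.continuous_dotp_left (ws - _root_.stdBasis i)).add continuous_const
      set T : Set (Fin N → ℝ) := A '' Sc with hT
      set O : Set (Fin N → ℝ) := {x | ∀ i, x i ≤ 0} with hO
      have hdisj : Disjoint T O := by
        rw [Set.disjoint_left]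
        rintro x ⟨g, hgSc, rfl⟩ hxO
        obtain ⟨i, hi⟩ := hcon' g hgSc
        exact absurd (hxO i) (not_le.mpr hi)
      have hTcomp : IsCompact T := hScc.image hAcont
      have hTconv : Convex ℝ T := by
        rintro x ⟨g₁, hg₁, rfl⟩ y ⟨g₂, hg₂, rfl⟩ a b ha hb hab
        refine ⟨a • g₁ + b • g₂, hScconv hg₁ hg₂ ha hb hab, ?_⟩
        funext i
        simp only [hA, Pi.add_apply, Pi.smul_apply, smul_eq_mul, Stmt12.dotp_add_left,
          Stmt12.dotp_smul_left]
        linear_combination (Dl (_root_.stdBasis i) - Dl ws) * hab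
      have hOclosed : IsClosed O := by
        have hOeq : O = ⋂ i, {x : Fin N → ℝ | x i ≤ 0} := by
          ext x; simp [hO, Set.mem_iInter]
        rw [hOeq]
        exact isClosed_iInter fun i => isClosed_le (continuous_apply i) continuous_const
      have hOconv : Convex ℝ O := by
        rintro x hx y hy a b ha hb hab
        intro i
        have h1 := hx i
        have h2 := hy i
        simp only [Pi.add_apply, Pi.smul_apply, smul_eq_mul]
        nlinarith
      obtain ⟨f, u, v, hfT, huv, hfO⟩ :=
        geometric_hahn_banach_compact_closed hTconv hTcomp hOconv hOclosed hdisj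
      have hv0 : v < 0 := by
        have h0 : (0 : Fin N → ℝ) ∈ O := fun i => le_refl 0
        have := hfO 0 h0
        simpa using this
      set p : Fin N → ℝ := fun i => -f (_root_.stdBasis i) with hp
      have hpnn : ∀ i, 0 ≤ p i := by
        intro i
        by_contra hneg
        push_neg at hneg
        have hfe : 0 < f (_root_.stdBasis i) := by
          simp only [hp] at hneg
          linarith
        have htpos : 0 < (1 - v) / f (_root_.stdBasis i) :=
          div_pos (by linarith) hfe
        have hmemO : (-((1 - v) / f (_root_.stdBasis i))) • _root_.stdBasis i ∈ O := by
          intro j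
          simp only [Pi.smul_apply, smul_eq_mul, _root_.stdBasis]
          by_cases h : j = i
          · rw [if_pos h, mul_one]; linarith
          · rw [if_neg h, mul_zero]
        have hlt := hfO _ hmemO
        rw [f.map_smul] at hlt
        simp only [smul_eq_mul] at hlt
        have hcalc : -((1 - v) / f (_root_.stdBasis i)) * f (_root_.stdBasis i) = v - 1 := by
          rw [neg_mul, div_mul_cancel₀ _ hfe.ne']; ring
        rw [hcalc] at hlt
        linarith
      have hfx : ∀ x : Fin N → ℝ, f x = -∑ i, x i * p i := by
        intro x
        conv_lhs => rw [← Stmt12.sum_smul_basis x]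
        rw [map_sum, ← Finset.sum_neg_distrib]
        refine Finset.sum_congr rfl fun i _ => ?_
        rw [f.map_smul]
        simp only [smul_eq_mul, hp]
        ring
      obtain ⟨β, hβeq, hβpos⟩ : ∃ β : ℝ, β = -v ∧ 0 < β := ⟨-v, rfl, by linarith⟩
      have hTbound : ∀ g ∈ Sc, β ≤ ∑ i, (A g) i * p i := by
        intro g hg
        have h1 : f (A g) < u := hfT (A g) ⟨g, hg, rfl⟩
        rw [hfx] at h1
        linarith
      obtain ⟨σ, hσeq⟩ : ∃ σ : ℝ, σ = ∑ i, p i := ⟨_, rfl⟩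
      have hσnn : 0 ≤ σ := hσeq ▸ Finset.sum_nonneg fun i _ => hpnn i
      have hσpos : 0 < σ := by
        rcases hσnn.lt_or_eq with h | h
        · exact h
        · exfalso
          have hz : ∑ i, p i = 0 := by rw [← hσeq, ← h]
          have hall := (Finset.sum_eq_zero_iff_of_nonneg (fun i _ => hpnn i)).mp hz
          obtain ⟨g, hg⟩ := hScne
          have hb := hTbound g hg
          rw [Finset.sum_eq_zero (fun i _ => by
            rw [hall i (Finset.mem_univ i), mul_zero])] at hb
          linarith
      set w₀ : Fin N → ℝ := fun i => p i / σ with hw₀def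
      have hw₀ : w₀ ∈ simplex N := by
        constructor
        · show (∑ i, p i / σ) = 1
          rw [← Finset.sum_div, ← hσeq, div_self hσpos.ne']
        · intro i
          exact div_nonneg (hpnn i) hσnn
      set u₀ : Fin N → ℝ := w₀ - ws with hu₀
      obtain ⟨α, hαeq, hαpos⟩ : ∃ α : ℝ, α = β / σ ∧ 0 < α :=
        ⟨β / σ, rfl, div_pos hβpos hσpos⟩
      obtain ⟨d, hdeq⟩ : ∃ d : ℝ, d = Dl u₀ := ⟨_, rfl⟩
      have hdwd : d = Dl w₀ - Dl ws := by rw [hdeq, hu₀, hDl_sub]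
      -- the key inequality on the active supporting gradients
      have hkey : ∀ v' ∈ V, dotp (gv v') u₀ ≤ -α - d := by
        intro v' hv'
        have hgS : gv v' ∈ Sc := hSsub ⟨v', hv', rfl⟩
        have h1 := hTbound _ hgS
        have e1 : σ * dotp (gv v') w₀ = ∑ i, p i * (gv v') i := by
          unfold dotp
          rw [Finset.mul_sum]
          refine Finset.sum_congr rfl fun i _ => ?_
          show σ * ((gv v') i * (p i / σ)) = p i * (gv v') i
          field_simp
          try ring
        have e2 : σ * Dl w₀ = ∑ i, p i * Dl (_root_.stdBasis i) := by
          rw [hDl_basis w₀, Finset.mul_sum]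
          refine Finset.sum_congr rfl fun i _ => ?_
          show σ * (p i / σ * Dl (_root_.stdBasis i)) = p i * Dl (_root_.stdBasis i)
          field_simp
          try ring
        have h2 : ∑ i, (A (gv v')) i * p i
            = σ * ((dotp (gv v') ws + Dl ws) - (dotp (gv v') w₀ + Dl w₀)) := by
          have expand : ∀ i : Fin N, (A (gv v')) i * p i
              = (dotp (gv v') ws + Dl ws) * p i - p i * (gv v') i
                - p i * Dl (_root_.stdBasis i) := by
            intro i
            show (dotp (gv v') (ws - _root_.stdBasis i)
                + (Dl ws - Dl (_root_.stdBasis i))) * p i = _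
            rw [Stmt12.dotp_sub, Stmt12.dotp_basis]
            ring
          rw [Finset.sum_congr rfl (fun i _ => expand i), Finset.sum_sub_distrib,
            Finset.sum_sub_distrib, ← Finset.mul_sum, ← e1, ← e2, ← hσeq]
          ring
        rw [h2] at h1
        have h3 : α ≤ (dotp (gv v') ws + Dl ws) - (dotp (gv v') w₀ + Dl w₀) := by
          rw [hαeq, div_le_iff₀ hσpos]
          nlinarith
        have h4 : dotp (gv v') u₀ = dotp (gv v') w₀ - dotp (gv v') ws := by
          rw [hu₀, Stmt12.dotp_sub]
        linarith [hdwd]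
      -- uniform bound on the directional terms
      have hKne : ({v' : Fin q₁ → ℝ | v' ⬝ᵥ v' = 1}).Nonempty := by
        obtain ⟨v', hv'⟩ := hVne
        exact ⟨v', hv'.1⟩
      obtain ⟨vB, hvB, hvBmax⟩ := (Stmt12.isCompact_sphere' q₁).exists_isMaxOn hKne
        (((Stmt12.continuous_dotp_left u₀).comp hgv_cont).abs).continuousOn
      obtain ⟨B, hBeq⟩ : ∃ B : ℝ, B = |dotp (gv vB) u₀| := ⟨_, rfl⟩
      have hBnn : 0 ≤ B := hBeq ▸ abs_nonneg _
      have hBbound : ∀ v', v' ⬝ᵥ v' = 1 → dotp (gv v') u₀ ≤ B := by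
        intro v' hv'
        have h1 : |dotp (gv v') u₀| ≤ |dotp (gv vB) u₀| := hvBmax hv'
        calc dotp (gv v') u₀ ≤ |dotp (gv v') u₀| := le_abs_self _
          _ ≤ B := by rw [hBeq]; exact h1
      -- split of the sphere into near-active and strictly decreasing directions
      have hsplit : ∃ δ > 0, ∀ v', v' ⬝ᵥ v' = 1 →
          dotp (gv v') ws ≤ -(lambdaMin (infoMat z₁ ws)) - δ
          ∨ dotp (gv v') u₀ ≤ -α/2 - d := by
        set Cs : Set (Fin q₁ → ℝ) :=
          {v' | v' ⬝ᵥ v' = 1 ∧ -α/2 - d ≤ dotp (gv v') u₀} with hCs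
        rcases Cs.eq_empty_or_nonempty with hCe | hCne
        · refine ⟨1, one_pos, fun v' hv' => Or.inr ?_⟩
          by_contra hlt
          push_neg at hlt
          have hmem : v' ∈ Cs := ⟨hv', hlt.le⟩
          rw [hCe] at hmem
          exact Set.notMem_empty v' hmem
        · have hCc : IsCompact Cs := by
            have hCseq : Cs = {v' : Fin q₁ → ℝ | v' ⬝ᵥ v' = 1}
                ∩ {v' | -α/2 - d ≤ dotp (gv v') u₀} := by
              ext v'; simp [hCs, Set.mem_inter_iff]
            rw [hCseq]
            exact (Stmt12.isCompact_sphere' q₁).inter_right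
              (isClosed_le continuous_const ((Stmt12.continuous_dotp_left u₀).comp hgv_cont))
          obtain ⟨vC, hvC, hvCmax⟩ := hCc.exists_isMaxOn hCne
            ((Stmt12.continuous_dotp_left ws).comp hgv_cont).continuousOn
          refine ⟨-(lambdaMin (infoMat z₁ ws)) - dotp (gv vC) ws, ?_, ?_⟩
          · have hle : dotp (gv vC) ws ≤ -(lambdaMin (infoMat z₁ ws)) :=
              (hrep ws).2 vC hvC.1
            rcases hle.lt_or_eq with h | h
            · linarith
            · exfalso
              have hvCV : vC ∈ V := ⟨hvC.1, h⟩
              have h5 := hkey vC hvCV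
              have h6 := hvC.2
              linarith
          · intro v' hv'
            by_cases hmem : v' ∈ Cs
            · left
              have h7 : dotp (gv v') ws ≤ dotp (gv vC) ws := hvCmax hmem
              linarith
            · right
              have h8 : ¬(-α/2 - d ≤ dotp (gv v') u₀) := fun h => hmem ⟨hv', h⟩
              linarith [not_le.mp h8]
      obtain ⟨δ, hδpos, hsplit⟩ := hsplit
      obtain ⟨t₀, ht₀eq⟩ : ∃ t₀ : ℝ, t₀ = min 1 (δ / (B + α/2 + |d| + 1)) := ⟨_, rfl⟩
      have hden : 0 < B + α/2 + |d| + 1 := by positivity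
      have ht₀pos : 0 < t₀ := by
        rw [ht₀eq]
        exact lt_min one_pos (div_pos hδpos hden)
      have ht₀le1 : t₀ ≤ 1 := ht₀eq ▸ min_le_left _ _
      -- decrease of the max part along the direction u₀
      have hdecr : ∀ t : ℝ, 0 < t → t ≤ t₀ →
          -(lambdaMin (infoMat z₁ (ws + t • u₀)))
            ≤ -(lambdaMin (infoMat z₁ ws)) + t * (-α/2 - d) := by
        intro t ht htle
        obtain ⟨⟨v₁, hv₁, hv₁eq⟩, hbd⟩ := hrep (ws + t • u₀)
        rw [← hv₁eq, Stmt12.dotp_add_smul]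
        rcases hsplit v₁ hv₁ with hl | hr
        · have hb := hBbound v₁ hv₁
          have htt : t * (B + α/2 + |d| + 1) ≤ δ := by
            have h9 : t ≤ δ / (B + α/2 + |d| + 1) :=
              le_trans htle (ht₀eq ▸ min_le_right _ _)
            rw [le_div_iff₀ hden] at h9
            linarith
          have habs1 : t * d ≤ t * |d| :=
            mul_le_mul_of_nonneg_left (le_abs_self d) ht.le
          have hbB : t * dotp (gv v₁) u₀ ≤ t * B :=
            mul_le_mul_of_nonneg_left hb ht.le
          linarith only [hl, htt, habs1, hbB, ht.le]
        · have hwle : dotp (gv v₁) ws ≤ -(lambdaMin (infoMat z₁ ws)) := (hrep ws).2 v₁ hv₁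
          have hmul : t * dotp (gv v₁) u₀ ≤ t * (-α/2 - d) :=
            mul_le_mul_of_nonneg_left hr ht.le
          linarith only [hwle, hmul]
      -- choose t small enough using the derivative of the penalty part
      have hev1 := Stmt12.eventually_incr_le (hψder u₀) (show (0:ℝ) < α/4 by linarith)
      have hev2 : ∀ᶠ t in nhdsWithin (0:ℝ) (Set.Ioi 0), t ∈ Set.Ioo 0 t₀ :=
        Ioo_mem_nhdsGT_of_mem (Set.mem_Ico.mpr ⟨le_refl 0, ht₀pos⟩)
      obtain ⟨t, h_incr, h_mem⟩ := (hev1.and hev2).exists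
      have htpos : 0 < t := h_mem.1
      have htlt : t < t₀ := h_mem.2
      have hmem_simplex : ws + t • u₀ ∈ simplex N := by
        rw [hu₀]
        exact Stmt12.seg_mem_simplex hws hw₀ htpos.le (le_trans htlt.le ht₀le1)
      have hmin' := hmin _ hmem_simplex
      have hΦd := hdecr t htpos htlt.le
      have h_incr' : (∑ k, η k * φ k (infoMat (z k) (ws + t • u₀)))
          - (∑ k, η k * φ k (infoMat (z k) ws)) ≤ t * (d + α/4) := by
        have h := h_incr
        rw [show ws + (0:ℝ) • u₀ = ws by simp] at h
        rw [hdeq]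
        exact h
      linarith only [hmin', hΦd, h_incr', mul_pos htpos hαpos]
  · -- easy direction
    rintro ⟨g, hg, hineq⟩ w hw
    have h1 : dotp g (w - ws)
        ≤ -(lambdaMin (infoMat z₁ w)) - -(lambdaMin (infoMat z₁ ws)) := hg w
    have h2 : ∀ k, L k (infoMat (z k) w - infoMat (z k) ws)
        ≤ φ k (infoMat (z k) w) - φ k (infoMat (z k) ws) := by
      intro k
      exact Stmt12.grad_ineq (hφconv k) (hdiff k) (infoMat (z k) w)
    have h3 : Dl w - Dl ws ≤ (∑ k, η k * φ k (infoMat (z k) w))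
        - ∑ k, η k * φ k (infoMat (z k) ws) := by
      have e1 : Dl w - Dl ws = ∑ k, η k * L k (infoMat (z k) w - infoMat (z k) ws) := by
        rw [← hDl_sub]
        unfold Dl
        unfold Stmt12.Dl
        refine (Finset.sum_congr rfl fun k _ => ?_)
        congr 1
        congr 1
        have h1' : w - ws + ws = w := by abel
        have h2' := Stmt12.infoMat_add (z k) (w - ws) ws
        rw [h1'] at h2'
        rw [h2']; abel
      rw [e1, ← Finset.sum_sub_distrib]
      refine Finset.sum_le_sum fun k _ => ?_
      have := mul_le_mul_of_nonneg_left (h2 k) (hη k)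
      calc η k * L k (infoMat (z k) w - infoMat (z k) ws)
          ≤ η k * (φ k (infoMat (z k) w) - φ k (infoMat (z k) ws)) := this
        _ = η k * φ k (infoMat (z k) w) - η k * φ k (infoMat (z k) ws) := by ring
    -- decomposition over vertices
    have hkey : 0 ≤ dotp g (w - ws) + (Dl w - Dl ws) := by
      have hdecomp : dotp g (w - ws) + (Dl w - Dl ws)
          = ∑ i, w i * ((dotp g (_root_.stdBasis i) - dotp g ws)
              + (Dl (_root_.stdBasis i) - Dl ws)) := by
        have e1 : ∑ i, w i * ((dotp g (_root_.stdBasis i) - dotp g ws)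
              + (Dl (_root_.stdBasis i) - Dl ws))
            = (∑ i, w i * dotp g (_root_.stdBasis i))
              + (∑ i, w i * Dl (_root_.stdBasis i))
              - (∑ i, w i) * (dotp g ws + Dl ws) := by
          rw [Finset.sum_mul]
          rw [← Finset.sum_add_distrib, ← Finset.sum_sub_distrib]
          refine Finset.sum_congr rfl fun i _ => by ring
        rw [e1, Stmt12.dotp_basis_sum, ← hDl_basis, hw.1, Stmt12.dotp_sub]
        ring
      rw [hdecomp]
      refine Finset.sum_nonneg fun i _ => mul_nonneg (hw.2 i) ?_
      have := hineq i
      rw [hCi i, Stmt12.dotp_sub] at this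
      rw [Stmt12.dotp_basis] at this ⊢
      linarith
    linarith
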